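/- arXiv:1305.6450 — 2 statements merged into one kernel-verified Lean document; each statement's English description precedes it below -/
import Mathlib

section
/- Let ε > 0, T > 0 and let H : [0,T] → ℝ be bounded above. Assume that for every t ∈ [0,T], H(t) ≤ e^{−t/ε} H(0) + (1 − e^{−t/ε}) · sup_{0≤s≤t} H(s). Then H(t) ≤ H(0) for all t ∈ [0,T]. -/
open MeasureTheory

theorem comparison_lemma_exponential (ε T : ℝ) (hε : 0 < ε) (hT : 0 < T)
    (H : ℝ → ℝ) (hbdd : BddAbove (H '' Set.Icc (0 : ℝ) T))
    (hyp : ∀ t ∈ Set.Icc (0 : ℝ) T,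
      H t ≤ Real.exp (-t / ε) * H 0 +
        (1 - Real.exp (-t / ε)) * sSup (H '' Set.Icc (0 : ℝ) t)) :
    ∀ t ∈ Set.Icc (0 : ℝ) T, H t ≤ H 0 := by
  set c := Real.exp (-T / ε) with hc
  have hcpos : 0 < c := Real.exp_pos _
  set M := sSup (H '' Set.Icc (0 : ℝ) T) with hM
  have hmem0 : H 0 ∈ H '' Set.Icc (0 : ℝ) T := ⟨0, ⟨le_rfl, hT.le⟩, rfl⟩
  have hH0M : H 0 ≤ M := le_csSup hbdd hmem0
  have key : ∀ t ∈ Set.Icc (0 : ℝ) T, H t ≤ M - c * (M - H 0) := by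
    intro t ht
    have h1 := hyp t ht
    have hsub : H '' Set.Icc (0 : ℝ) t ⊆ H '' Set.Icc (0 : ℝ) T :=
      Set.image_mono (Set.Icc_subset_Icc le_rfl ht.2)
    have hne : (H '' Set.Icc (0 : ℝ) t).Nonempty := ⟨H 0, 0, ⟨le_rfl, ht.1⟩, rfl⟩
    have hs : sSup (H '' Set.Icc (0 : ℝ) t) ≤ M := csSup_le_csSup hbdd hne hsub
    have he : c ≤ Real.exp (-t / ε) := by
      apply Real.exp_le_exp.mpr
      gcongr
      exact ht.2
    have he1 : Real.exp (-t / ε) ≤ 1 := by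
      apply Real.exp_le_one_iff.mpr
      have h0 : 0 ≤ t / ε := div_nonneg ht.1 hε.le
      rw [neg_div]
      linarith
    nlinarith [Real.exp_pos (-t / ε)]
  have hMle : M ≤ M - c * (M - H 0) :=
    csSup_le ⟨H 0, hmem0⟩ (by rintro x ⟨t, ht, rfl⟩; exact key t ht)
  have hMH0 : M ≤ H 0 := by nlinarith
  intro t ht
  exact le_trans (le_csSup hbdd ⟨t, ht, rfl⟩) hMH0
end

section
/- Let u ∈ ℝ and let F : ℝ → ℝ be measurable with 0 ≤ F(ζ) ≤ 1 for all ζ ∈ ℝ. Assume the function g(ζ) = 1_{u>ζ} − F(ζ) is integrable on ℝ and ∫_ℝ g(ζ) dζ = 0. Then for every ξ ∈ ℝ, ∫_{(−∞,ξ]} (1_{u>ζ} − F(ζ)) dζ ≥ 0. -/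
open MeasureTheory

theorem defect_measure_nonneg (u : ℝ) (F : ℝ → ℝ) (hFmeas : Measurable F)
    (hF01 : ∀ ζ : ℝ, 0 ≤ F ζ ∧ F ζ ≤ 1)
    (hint : Integrable (fun ζ : ℝ =>
      Set.indicator {z : ℝ | z < u} (1 : ℝ → ℝ) ζ - F ζ))
    (hzero : ∫ ζ : ℝ, (Set.indicator {z : ℝ | z < u} (1 : ℝ → ℝ) ζ - F ζ) = 0) :
    ∀ ξ : ℝ, 0 ≤ ∫ ζ in Set.Iic ξ,
      (Set.indicator {z : ℝ | z < u} (1 : ℝ → ℝ) ζ - F ζ) := by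
  intro ξ
  rcases lt_or_ge ξ u with h | h
  · apply setIntegral_nonneg measurableSet_Iic
    intro x hx
    have hxu : x ∈ {z : ℝ | z < u} := lt_of_le_of_lt hx h
    rw [Set.indicator_of_mem hxu]
    simp only [Pi.one_apply]
    linarith [(hF01 x).2]
  · have hsplit := intervalIntegral.integral_Iic_add_Ioi
      (hint.integrableOn (s := Set.Iic ξ)) (hint.integrableOn (s := Set.Ioi ξ))
    rw [hzero] at hsplit
    have hIoi : (∫ ζ in Set.Ioi ξ,
        (Set.indicator {z : ℝ | z < u} (1 : ℝ → ℝ) ζ - F ζ)) ≤ 0 := by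
      apply setIntegral_nonpos measurableSet_Ioi
      intro x hx
      have hxu : x ∉ {z : ℝ | z < u} := by
        simp only [Set.mem_setOf_eq, not_lt]
        exact h.trans hx.le
      rw [Set.indicator_of_notMem hxu]
      linarith [(hF01 x).1]
    linarith
end
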